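/- Let (X_n)_{n≥0} be a stochastic approximation algorithm taking values in [0,1], and assume g : [0,1] → ℝ is non-increasing and continuous with |g(x)| ≤ K_g for some positive constant K_g and all x ∈ [0,1], and that g has a unique zero x* in [0,1] (so that g(x) > 0 for x < x* and g(x) < 0 for x > x*). Then for any ε > 0 there exists a constant a > 0, independent of n, such that for all sufficiently large n, ℙ(|X_{n+1} − x*| > ε) ≤ 2 e^{−a n}. -/

import Mathlib

open MeasureTheory Filter Set Real Finset


lemma SAaux.exp_le_one_add_add_sq {x : ℝ} (hx : |x| ≤ 1) : Real.exp x ≤ 1 + x + x ^ 2 := by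
  have h := Real.exp_bound hx (n := 2) (by norm_num)
  have h2 : Real.exp x - (1 + x) ≤ |x| ^ 2 * (3 / (2 * 2)) := by
    have := (abs_sub_le_iff.1 h).1
    simpa [Finset.sum_range_succ, Nat.factorial] using this
  have h3 : |x| ^ 2 = x ^ 2 := sq_abs x
  nlinarith [sq_nonneg x]

lemma SAaux.sum_inv_sq_le {k n : ℕ} (hk : 1 ≤ k) :
    ∑ j ∈ Finset.Icc k n, (1 : ℝ) / (j : ℝ) ^ 2 ≤ 2 / k := by
  rcases le_or_gt k n with h | h
  · have key : ∀ m, k ≤ m → ∑ j ∈ Finset.Icc k m, (1 : ℝ) / (j : ℝ) ^ 2 ≤ 2 / k - 1 / m := by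
      intro m hm
      induction m, hm using Nat.le_induction with
      | base =>
        simp only [Finset.Icc_self, Finset.sum_singleton]
        have hk' : (1:ℝ) ≤ (k:ℝ) := by exact_mod_cast hk
        have hkpos : (0:ℝ) < k := by positivity
        rw [div_sub_div _ _ (ne_of_gt hkpos) (ne_of_gt hkpos)]
        rw [div_le_div_iff₀ (by positivity) (by positivity)]
        ring_nf
        nlinarith
      | succ m hm ih =>
        rw [← Finset.insert_Icc_right_eq_Icc_add_one (by omega), Finset.sum_insert (by simp)]
        have hmpos : (0:ℝ) < m := by
          have : 1 ≤ m := le_trans hk hm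
          exact_mod_cast this
        have h1 : (1:ℝ) / ((m:ℝ)+1) ^ 2 ≤ 1 / m - 1 / ((m:ℝ)+1) := by
          rw [div_sub_div _ _ (ne_of_gt hmpos) (by positivity)]
          rw [div_le_div_iff₀ (by positivity) (by positivity)]
          ring_nf
          nlinarith
        push_cast
        push_cast at ih h1
        linarith
    have := key n h
    have hnpos : (0:ℝ) < n := by
      have : 1 ≤ n := le_trans hk h
      exact_mod_cast this
    have : (0:ℝ) ≤ 1 / n := by positivity
    linarith [key n h]
  · rw [Finset.Icc_eq_empty (by omega)]
    simp
    positivity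

lemma SAaux.log_le_sum_inv {k n : ℕ} :
    Real.log (((n : ℝ) + 2) / ((k : ℝ) + 1)) ≤ ∑ j ∈ Finset.Icc k n, (1 : ℝ) / ((j : ℝ) + 1) := by
  rcases le_or_gt k n with h | h
  · induction n, h using Nat.le_induction with
    | base =>
      simp only [Finset.Icc_self, Finset.sum_singleton]
      have h1 : Real.log (((k:ℝ)+2) / ((k:ℝ)+1)) ≤ ((k:ℝ)+2)/((k:ℝ)+1) - 1 :=
        Real.log_le_sub_one_of_pos (by positivity)
      have h2 : ((k:ℝ)+2)/((k:ℝ)+1) - 1 = 1 / ((k:ℝ)+1) := by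
        field_simp
        norm_num
      linarith
    | succ m hm ih =>
      rw [← Finset.insert_Icc_right_eq_Icc_add_one (by omega), Finset.sum_insert (by simp)]
      have h1 : Real.log (((m:ℝ)+1+2) / ((k:ℝ)+1)) =
          Real.log (((m:ℝ)+2) / ((k:ℝ)+1)) + Real.log (((m:ℝ)+3)/((m:ℝ)+2)) := by
        rw [← Real.log_mul (by positivity) (by positivity)]
        congr 1
        field_simp
        norm_num
        ring
      have h2 : Real.log (((m:ℝ)+3)/((m:ℝ)+2)) ≤ 1 / ((m:ℝ)+1+1) := by
        have := Real.log_le_sub_one_of_pos (x := ((m:ℝ)+3)/((m:ℝ)+2)) (by positivity)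
        have h3 : ((m:ℝ)+3)/((m:ℝ)+2) - 1 = 1/((m:ℝ)+2) := by field_simp; norm_num
        rw [h3] at this
        convert this using 2
        ring
      push_cast at ih h1 h2 ⊢
      linarith
  · rw [Finset.Icc_eq_empty (by omega)]
    simp only [Finset.sum_empty]
    apply Real.log_nonpos
    · positivity
    · rw [div_le_one (by positivity)]
      have : (n:ℝ) + 1 ≤ (k:ℝ) := by exact_mod_cast h
      linarith

lemma SAaux.sum_telescope_Icc (f : ℕ → ℝ) (k n : ℕ) (h : k ≤ n + 1) :
    ∑ j ∈ Finset.Icc k n, (f (j + 1) - f j) = f (n + 1) - f k := by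
  induction n with
  | zero =>
    interval_cases k
    · simp
    · simp
  | succ m ih =>
    rcases Nat.lt_or_ge k (m + 2) with h' | h'
    · rw [← Finset.insert_Icc_right_eq_Icc_add_one (by omega), Finset.sum_insert (by simp), ih (by omega)]
      ring
    · have : k = m + 2 := le_antisymm h h'
      subst this
      rw [Finset.Icc_eq_empty (by omega)]
      simp


lemma SAaux.integrable_of_ae_bound {Ω : Type*} {m0 : MeasurableSpace Ω} {μ : MeasureTheory.Measure Ω}
    [MeasureTheory.IsFiniteMeasure μ] {f : Ω → ℝ} (hf : MeasureTheory.AEStronglyMeasurable f μ) {C : ℝ}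
    (h : ∀ᵐ ω ∂μ, |f ω| ≤ C) : MeasureTheory.Integrable f μ :=
  MeasureTheory.Integrable.mono' (MeasureTheory.integrable_const C) hf (by simpa [Real.norm_eq_abs] using h)


lemma SAaux.eventually_mul_exp_le (c K : ℝ) (hc : 0 < c) :
    ∀ᶠ n : ℕ in atTop, (n : ℝ) * Real.exp K ≤ Real.exp (c * n) := by
  have htend : Tendsto (fun n : ℕ => Real.exp (c * n / 2)) atTop atTop := by
    apply Real.tendsto_exp_atTop.comp
    apply Tendsto.atTop_div_const (by norm_num)
    exact (tendsto_natCast_atTop_atTop (R := ℝ)).const_mul_atTop hc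
  filter_upwards [htend.eventually_ge_atTop ((2 / c) * Real.exp K)] with n hn
  have h1 : c * n / 2 ≤ Real.exp (c * n / 2) :=
    le_trans (by linarith [Real.add_one_le_exp (c * n / 2)]) le_rfl
  have h2 : (0:ℝ) ≤ c * n / 2 := by positivity
  have key : (n : ℝ) * Real.exp K = (c * n / 2) * ((2 / c) * Real.exp K) := by
    field_simp
  rw [key]
  calc (c * n / 2) * ((2 / c) * Real.exp K)
      ≤ Real.exp (c * n / 2) * Real.exp (c * n / 2) := by
        apply mul_le_mul h1 hn (by positivity) (Real.exp_nonneg _)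
  _ = Real.exp (c * n) := by rw [← Real.exp_add]; ring_nf

lemma SAaux.condexp_exp_le {Ω : Type*} {m0 : MeasurableSpace Ω} {μ : Measure Ω}
    [IsProbabilityMeasure μ] {m : MeasurableSpace Ω} (hm : m ≤ m0)
    {Y : Ω → ℝ} (hY : Measurable[m0] Y) {B e t : ℝ} (ht : 0 ≤ t) (htB : t * B ≤ 1)
    (hB : ∀ᵐ ω ∂μ, |Y ω| ≤ B) (he : ∀ᵐ ω ∂μ, |(μ[Y|m]) ω| ≤ e) :
    ∀ᵐ ω ∂μ, (μ[fun ω => Real.exp (t * Y ω)|m]) ω ≤ Real.exp (t * e + t ^ 2 * B ^ 2) := by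
  haveI : (MeasureTheory.ae μ).NeBot := ae_neBot.mpr (IsProbabilityMeasure.ne_zero (μ := μ))
  obtain ⟨ω0, hω0⟩ := hB.exists
  have hBnn : 0 ≤ B := le_trans (abs_nonneg _) hω0
  have hint_Y : Integrable Y μ := SAaux.integrable_of_ae_bound (hY.aestronglyMeasurable (μ := μ)) hB
  have hY2 : Measurable[m0] fun ω => Y ω ^ 2 := hY.pow_const 2
  have hB2 : ∀ᵐ ω ∂μ, |Y ω ^ 2| ≤ B ^ 2 := by
    filter_upwards [hB] with ω hω
    rw [abs_pow, sq_abs, ← sq_abs]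
    exact pow_le_pow_left₀ (abs_nonneg _) hω 2
  have hint_Y2 : Integrable (fun ω => Y ω ^ 2) μ :=
    SAaux.integrable_of_ae_bound (hY2.aestronglyMeasurable (μ := μ)) hB2
  have habs : ∀ᵐ ω ∂μ, |t * Y ω| ≤ 1 := by
    filter_upwards [hB] with ω hω
    rw [abs_mul, abs_of_nonneg ht]
    calc t * |Y ω| ≤ t * B := by apply mul_le_mul_of_nonneg_left hω ht
    _ ≤ 1 := htB
  have hint_exp : Integrable (fun ω => Real.exp (t * Y ω)) μ := by
    have : (fun ω => Real.exp (t * Y ω)) = Real.exp ∘ (fun ω => t * Y ω) := rfl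
    rw [this]
    apply SAaux.integrable_of_ae_bound ((Real.measurable_exp.comp ((measurable_const.mul hY))).aestronglyMeasurable (μ := μ))
    filter_upwards [habs] with ω hω
    simp only [Function.comp_apply]
    rw [abs_of_nonneg (Real.exp_nonneg _)]
    exact Real.exp_le_exp.2 (le_trans (le_abs_self _) hω)
  set poly : Ω → ℝ := (fun _ => (1:ℝ)) + (t • Y + t ^ 2 • fun ω => Y ω ^ 2) with hpoly
  have hint_poly : Integrable poly μ :=
    (integrable_const 1).add ((hint_Y.smul t).add (hint_Y2.smul (t ^ 2)))
  have step1 : (μ[fun ω => Real.exp (t * Y ω)|m]) ≤ᵐ[μ] μ[poly|m] := by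
    apply condExp_mono hint_exp hint_poly
    filter_upwards [habs] with ω hω
    have := SAaux.exp_le_one_add_add_sq hω
    simp only [hpoly, Pi.add_apply, Pi.smul_apply, smul_eq_mul]
    nlinarith [this]
  have step2 : μ[poly|m] =ᵐ[μ]
      (fun _ => (1:ℝ)) + (t • μ[Y|m] + t ^ 2 • μ[fun ω => Y ω ^ 2|m]) := by
    refine (condExp_add (integrable_const 1) ((hint_Y.smul t).add (hint_Y2.smul (t ^ 2))) m).trans ?_
    have h1 : μ[(fun _ => (1:ℝ))|m] = fun _ => (1:ℝ) := condExp_const hm 1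
    have h2 := condExp_add (hint_Y.smul t) (hint_Y2.smul (t ^ 2)) (μ := μ) (m := m)
    have h3 := condExp_smul (μ := μ) (m := m) t Y
    have h4 := condExp_smul (μ := μ) (m := m) (t ^ 2) (fun ω => Y ω ^ 2)
    filter_upwards [h2, h3, h4] with ω e2 e3 e4
    simp only [Pi.add_apply, h1, Pi.smul_apply, smul_eq_mul] at *
    rw [e2, e3, e4]
  have step3 : (μ[fun ω => Y ω ^ 2|m]) ≤ᵐ[μ] fun _ => B ^ 2 := by
    have := condExp_mono (μ := μ) (m := m) hint_Y2 (integrable_const (B ^ 2))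
      (by filter_upwards [hB2] with ω hω; exact le_trans (le_abs_self _) hω)
    rw [condExp_const hm (B ^ 2)] at this
    exact this
  filter_upwards [step1, step2, step3, he] with ω s1 s2 s3 hec
  have : (μ[poly|m]) ω ≤ 1 + (t * e + t ^ 2 * B ^ 2) := by
    rw [s2]
    simp only [Pi.add_apply, Pi.smul_apply, smul_eq_mul]
    have q1 : t * (μ[Y|m]) ω ≤ t * e :=
      mul_le_mul_of_nonneg_left (le_trans (le_abs_self _) hec) ht
    have q2 : t ^ 2 * (μ[fun ω => Y ω ^ 2|m]) ω ≤ t ^ 2 * B ^ 2 :=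
      mul_le_mul_of_nonneg_left s3 (sq_nonneg t)
    linarith
  calc (μ[fun ω => Real.exp (t * Y ω)|m]) ω ≤ 1 + (t * e + t ^ 2 * B ^ 2) := le_trans s1 this
  _ ≤ Real.exp (t * e + t ^ 2 * B ^ 2) := by linarith [Real.add_one_le_exp (t * e + t ^ 2 * B ^ 2)]

namespace SAaux

variable {Ω : Type*} {m0 : MeasurableSpace Ω} {μ : Measure Ω}
    [IsProbabilityMeasure μ] (ℱ : Filtration ℕ m0)

lemma mgf_step {D : ℕ → Ω → ℝ} {B e : ℕ → ℝ}
    (hD : ∀ j, Measurable[ℱ (j + 1)] (D j))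
    (hB : ∀ j, ∀ᵐ ω ∂μ, |D j ω| ≤ B j)
    {k : ℕ} (he : ∀ j, k ≤ j → ∀ᵐ ω ∂μ, |(μ[D j|ℱ j]) ω| ≤ e j)
    {t : ℝ} (ht : 0 ≤ t) (htB : ∀ j, k ≤ j → t * B j ≤ 1)
    (m : ℕ) (hkm : k ≤ m) (S : Ω → ℝ) (hS : Measurable[ℱ m] S)
    (R : ℝ) (hR : ∀ᵐ ω ∂μ, |S ω| ≤ R) :
    ∫ ω, Real.exp (t * (S ω + D m ω)) ∂μ ≤
      Real.exp (t * e m + t ^ 2 * (B m) ^ 2) * ∫ ω, Real.exp (t * S ω) ∂μ := by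
  set ρ : ℝ := Real.exp (t * e m + t ^ 2 * (B m) ^ 2) with hρdef
  set f : Ω → ℝ := fun ω => Real.exp (t * S ω) with hfdef
  set h : Ω → ℝ := fun ω => Real.exp (t * D m ω) with hhdef
  have hDm0 : Measurable[m0] (D m) := (hD m).mono (ℱ.le (m + 1)) le_rfl
  have hSm0 : Measurable[m0] S := hS.mono (ℱ.le m) le_rfl
  have hfm : Measurable[ℱ m] f := Real.measurable_exp.comp (hS.const_mul t)
  have hfm0 : Measurable[m0] f := Real.measurable_exp.comp (hSm0.const_mul t)
  have hhm0 : Measurable[m0] h := Real.measurable_exp.comp (hDm0.const_mul t)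
  have hfb : ∀ᵐ ω ∂μ, |f ω| ≤ Real.exp (t * R) := by
    filter_upwards [hR] with ω hω
    rw [abs_of_nonneg (Real.exp_nonneg _)]
    apply Real.exp_le_exp.2
    calc t * S ω ≤ t * |S ω| := mul_le_mul_of_nonneg_left (le_abs_self _) ht
    _ ≤ t * R := mul_le_mul_of_nonneg_left hω ht
  have hhb : ∀ᵐ ω ∂μ, |h ω| ≤ Real.exp (t * B m) := by
    filter_upwards [hB m] with ω hω
    rw [abs_of_nonneg (Real.exp_nonneg _)]
    apply Real.exp_le_exp.2
    calc t * D m ω ≤ t * |D m ω| := mul_le_mul_of_nonneg_left (le_abs_self _) ht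
    _ ≤ t * B m := mul_le_mul_of_nonneg_left hω ht
  have hf_int : Integrable f μ := integrable_of_ae_bound (hfm0.aestronglyMeasurable (μ := μ)) hfb
  have hh_int : Integrable h μ := integrable_of_ae_bound (hhm0.aestronglyMeasurable (μ := μ)) hhb
  have hfh_int : Integrable (f * h) μ := by
    apply integrable_of_ae_bound ((hfm0.mul hhm0).aestronglyMeasurable (μ := μ))
      (C := Real.exp (t * R) * Real.exp (t * B m))
    filter_upwards [hfb, hhb] with ω h1 h2
    rw [Pi.mul_apply, abs_mul]
    exact mul_le_mul h1 h2 (abs_nonneg _) (Real.exp_nonneg _)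
  have hcond := condexp_exp_le (μ := μ) (ℱ.le m) hDm0 ht (htB m hkm) (hB m) (he m hkm)
  have hcond_nonneg : 0 ≤ᵐ[μ] μ[h|ℱ m] :=
    condExp_nonneg (Filter.Eventually.of_forall fun ω => Real.exp_nonneg _)
  have key : μ[f * h|ℱ m] =ᵐ[μ] f * μ[h|ℱ m] :=
    condExp_mul_of_stronglyMeasurable_left hfm.stronglyMeasurable hfh_int hh_int
  have step0 : ∫ ω, Real.exp (t * (S ω + D m ω)) ∂μ = ∫ ω, (f * h) ω ∂μ := by
    apply integral_congr_ae
    apply Filter.Eventually.of_forall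
    intro ω
    simp only [hfdef, hhdef, Pi.mul_apply]
    rw [← Real.exp_add]
    ring_nf
  have step1 : ∫ ω, (f * h) ω ∂μ = ∫ ω, (μ[f * h|ℱ m]) ω ∂μ :=
    (integral_condExp (ℱ.le m)).symm
  have step2 : ∫ ω, (μ[f * h|ℱ m]) ω ∂μ = ∫ ω, f ω * (μ[h|ℱ m]) ω ∂μ :=
    integral_congr_ae (key.mono fun ω hω => by rw [hω]; rfl)
  have int_lhs : Integrable (fun ω => f ω * (μ[h|ℱ m]) ω) μ := by
    apply integrable_of_ae_bound
      ((hfm0.aestronglyMeasurable (μ := μ)).mul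
        ((stronglyMeasurable_condExp.mono (ℱ.le m)).aestronglyMeasurable))
      (C := Real.exp (t * R) * ρ)
    filter_upwards [hfb, hcond, hcond_nonneg] with ω h1 h2 h3
    simp only [Pi.mul_apply]
    rw [abs_mul]
    apply mul_le_mul h1 _ (abs_nonneg _) (Real.exp_nonneg _)
    rw [abs_of_nonneg h3]
    exact h2
  have step3 : ∫ ω, f ω * (μ[h|ℱ m]) ω ∂μ ≤ ∫ ω, f ω * ρ ∂μ := by
    apply integral_mono_ae int_lhs (hf_int.mul_const ρ)
    filter_upwards [hcond] with ω h2
    exact mul_le_mul_of_nonneg_left h2 (Real.exp_nonneg _)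
  have step4 : ∫ ω, f ω * ρ ∂μ = ρ * ∫ ω, f ω ∂μ := by
    rw [integral_mul_const]; ring
  rw [step0, step1, step2]
  rw [step4] at step3
  exact step3

lemma mgf_sum_le {D : ℕ → Ω → ℝ} {B e : ℕ → ℝ}
    (hD : ∀ j, Measurable[ℱ (j + 1)] (D j))
    (hB : ∀ j, ∀ᵐ ω ∂μ, |D j ω| ≤ B j)
    {k : ℕ} (he : ∀ j, k ≤ j → ∀ᵐ ω ∂μ, |(μ[D j|ℱ j]) ω| ≤ e j)
    {t : ℝ} (ht : 0 ≤ t) (htB : ∀ j, k ≤ j → t * B j ≤ 1) (n : ℕ) :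
    ∫ ω, Real.exp (t * ∑ j ∈ Finset.Icc k n, D j ω) ∂μ ≤
      Real.exp (∑ j ∈ Finset.Icc k n, (t * e j + t ^ 2 * (B j) ^ 2)) := by
  induction n with
  | zero =>
    rcases Nat.eq_zero_or_pos k with hk | hk
    · subst hk
      have h0 : (Finset.Icc 0 0 : Finset ℕ) = {0} := rfl
      simp only [h0, Finset.sum_singleton]
      have := mgf_step ℱ hD hB he ht htB 0 le_rfl (fun _ => 0)
        (@measurable_const ℝ Ω _ (ℱ 0) 0) 0
        (Filter.Eventually.of_forall (by simp))
      simpa using this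
    · rw [Finset.Icc_eq_empty (by omega)]
      simp
  | succ n ih =>
    rcases Nat.lt_or_ge n.succ k with h' | h'
    · have e1 : Finset.Icc k (n + 1) = ∅ := Finset.Icc_eq_empty (by omega)
      rw [e1]
      simp
    · rw [← Finset.insert_Icc_right_eq_Icc_add_one (by omega)]
      have hnotmem : n + 1 ∉ Finset.Icc k n := by simp
      simp only [Finset.sum_insert hnotmem]
      have hSmeas : Measurable[ℱ (n + 1)] (fun ω => ∑ j ∈ Finset.Icc k n, D j ω) := by
        apply Finset.measurable_sum
        intro j hj
        have hj' : j + 1 ≤ n + 1 := by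
          simp only [Finset.mem_Icc] at hj; omega
        exact ((hD j).mono (ℱ.mono hj') le_rfl)
      have hSbound : ∀ᵐ ω ∂μ, |∑ j ∈ Finset.Icc k n, D j ω| ≤ ∑ j ∈ Finset.Icc k n, B j := by
        have : ∀ᵐ ω ∂μ, ∀ j ∈ Finset.Icc k n, |D j ω| ≤ B j :=
          (ae_ball_iff ((Finset.Icc k n : Finset ℕ) : Set ℕ).to_countable).2
            fun j _ => hB j
        filter_upwards [this] with ω hω
        calc |∑ j ∈ Finset.Icc k n, D j ω| ≤ ∑ j ∈ Finset.Icc k n, |D j ω| :=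
          Finset.abs_sum_le_sum_abs _ _
        _ ≤ ∑ j ∈ Finset.Icc k n, B j := Finset.sum_le_sum fun j hj => hω j hj
      have hstep := mgf_step ℱ hD hB he ht htB (n + 1) h'
        (fun ω => ∑ j ∈ Finset.Icc k n, D j ω) hSmeas _ hSbound
      have goal_eq : ∀ ω, D (n + 1) ω + ∑ j ∈ Finset.Icc k n, D j ω
          = (∑ j ∈ Finset.Icc k n, D j ω) + D (n + 1) ω := fun ω => by ring
      calc ∫ ω, Real.exp (t * (D (n + 1) ω + ∑ j ∈ Finset.Icc k n, D j ω)) ∂μ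
          = ∫ ω, Real.exp (t * ((∑ j ∈ Finset.Icc k n, D j ω) + D (n + 1) ω)) ∂μ := by
            apply integral_congr_ae; apply Filter.Eventually.of_forall; intro ω
            show Real.exp (t * (D (n + 1) ω + ∑ j ∈ Finset.Icc k n, D j ω)) =
              Real.exp (t * ((∑ j ∈ Finset.Icc k n, D j ω) + D (n + 1) ω))
            exact congrArg Real.exp (by ring)
        _ ≤ Real.exp (t * e (n + 1) + t ^ 2 * (B (n + 1)) ^ 2) *
            ∫ ω, Real.exp (t * ∑ j ∈ Finset.Icc k n, D j ω) ∂μ := hstep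
        _ ≤ Real.exp (t * e (n + 1) + t ^ 2 * (B (n + 1)) ^ 2) *
            Real.exp (∑ j ∈ Finset.Icc k n, (t * e j + t ^ 2 * (B j) ^ 2)) := by
            apply mul_le_mul_of_nonneg_left ih (Real.exp_nonneg _)
        _ = Real.exp ((t * e (n + 1) + t ^ 2 * (B (n + 1)) ^ 2) +
            ∑ j ∈ Finset.Icc k n, (t * e j + t ^ 2 * (B j) ^ 2)) := (Real.exp_add _ _).symm

lemma chernoff_window {D : ℕ → Ω → ℝ} {B e : ℕ → ℝ}
    (hD : ∀ j, Measurable[ℱ (j + 1)] (D j))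
    (hB : ∀ j, ∀ᵐ ω ∂μ, |D j ω| ≤ B j)
    {k : ℕ} (he : ∀ j, k ≤ j → ∀ᵐ ω ∂μ, |(μ[D j|ℱ j]) ω| ≤ e j)
    {t : ℝ} (ht : 0 ≤ t) (htB : ∀ j, k ≤ j → t * B j ≤ 1) (n : ℕ) {s : ℝ} :
    μ {ω | s ≤ ∑ j ∈ Finset.Icc k n, D j ω} ≤
      ENNReal.ofReal (Real.exp (-t * s + ∑ j ∈ Finset.Icc k n, (t * e j + t ^ 2 * (B j) ^ 2))) := by
  set Z : Ω → ℝ := fun ω => ∑ j ∈ Finset.Icc k n, D j ω with hZ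
  have hZmeas : Measurable[m0] Z := by
    apply Finset.measurable_sum
    intro j _
    exact ((hD j).mono (ℱ.le (j + 1)) le_rfl)
  have hZbound : ∀ᵐ ω ∂μ, |Z ω| ≤ ∑ j ∈ Finset.Icc k n, B j := by
    have : ∀ᵐ ω ∂μ, ∀ j ∈ Finset.Icc k n, |D j ω| ≤ B j :=
      (ae_ball_iff ((Finset.Icc k n : Finset ℕ) : Set ℕ).to_countable).2 fun j _ => hB j
    filter_upwards [this] with ω hω
    calc |Z ω| ≤ ∑ j ∈ Finset.Icc k n, |D j ω| := Finset.abs_sum_le_sum_abs _ _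
    _ ≤ _ := Finset.sum_le_sum fun j hj => hω j hj
  have hint : Integrable (fun ω => Real.exp (t * Z ω)) μ := by
    have hm : Measurable[m0] fun ω => Real.exp (t * Z ω) :=
      Real.measurable_exp.comp (hZmeas.const_mul t)
    apply integrable_of_ae_bound (hm.aestronglyMeasurable (μ := μ))
      (C := Real.exp (t * ∑ j ∈ Finset.Icc k n, B j))
    filter_upwards [hZbound] with ω hω
    rw [abs_of_nonneg (Real.exp_nonneg _)]
    apply Real.exp_le_exp.2
    calc t * Z ω ≤ t * |Z ω| := mul_le_mul_of_nonneg_left (le_abs_self _) ht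
    _ ≤ _ := mul_le_mul_of_nonneg_left hω ht
  have hch := ProbabilityTheory.measure_ge_le_exp_mul_mgf (μ := μ) (X := Z) s ht hint
  have hmgf : ProbabilityTheory.mgf Z μ t ≤
      Real.exp (∑ j ∈ Finset.Icc k n, (t * e j + t ^ 2 * (B j) ^ 2)) :=
    mgf_sum_le ℱ hD hB he ht htB n
  have h2 : (μ {ω | s ≤ Z ω}).toReal ≤
      Real.exp (-t * s + ∑ j ∈ Finset.Icc k n, (t * e j + t ^ 2 * (B j) ^ 2)) := by
    rw [Real.exp_add]
    calc (μ {ω | s ≤ Z ω}).toReal ≤ Real.exp (-t * s) * ProbabilityTheory.mgf Z μ t := hch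
    _ ≤ _ := mul_le_mul_of_nonneg_left hmgf (Real.exp_nonneg _)
  calc μ {ω | s ≤ Z ω} = ENNReal.ofReal ((μ {ω | s ≤ Z ω}).toReal) :=
        (ENNReal.ofReal_toReal (measure_ne_top _ _)).symm
  _ ≤ _ := ENNReal.ofReal_le_ofReal h2

end SAaux

set_option maxHeartbeats 2000000 in
theorem SAaux.sa_upper
    {Ω : Type*} {m0 : MeasurableSpace Ω} {ℙ : Measure Ω} [IsProbabilityMeasure ℙ]
    (ℱ : Filtration ℕ m0)
    (X γ U : ℕ → Ω → ℝ) (g : ℝ → ℝ)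
    (hγ_meas : ∀ n : ℕ, Measurable[ℱ n] (γ n))
    (hU_meas : ∀ n : ℕ, Measurable[ℱ n] (U n))
    (hrec : ∀ (n : ℕ) ω, X (n + 1) ω = X n ω + γ (n + 1) ω * (g (X n ω) + U (n + 1) ω))
    (ul uu Ku Ke : ℝ) (hul : 0 < ul) (huu : 0 < uu) (hKu : 0 < Ku) (hKe : 0 < Ke)
    (hγ_bound : ∀ n : ℕ, 1 ≤ n → ∀ᵐ ω ∂ℙ, ul / n ≤ γ n ω ∧ γ n ω ≤ uu / n)
    (hU_bound : ∀ n : ℕ, ∀ᵐ ω ∂ℙ, |U (n + 1) ω| ≤ Ku)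
    (hcond : ∀ n : ℕ, 1 ≤ n →
      ∀ᵐ ω ∂ℙ, |(ℙ[fun ω' => γ (n + 1) ω' * U (n + 1) ω' | ℱ n]) ω| ≤ Ke / (n : ℝ) ^ 2)
    (hXmem : ∀ (n : ℕ) (ω : Ω), X n ω ∈ Set.Icc (0:ℝ) 1)
    (Kg : ℝ) (hKg : 0 < Kg) (hg_bdd : ∀ x ∈ Set.Icc (0:ℝ) 1, |g x| ≤ Kg)
    (hg_anti : AntitoneOn g (Set.Icc 0 1))
    (xstar : ℝ) (hxs_mem : xstar ∈ Set.Icc (0:ℝ) 1)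
    (hg_neg : ∀ x ∈ Set.Icc (0:ℝ) 1, xstar < x → g x < 0)
    (ε : ℝ) (hε : 0 < ε) :
    ∃ a > (0:ℝ), ∀ᶠ n in atTop,
      ℙ {ω | X (n + 1) ω - xstar > ε} ≤ ENNReal.ofReal (Real.exp (-a * n)) := by
  by_cases hcase : 1 ≤ xstar + ε
  · refine ⟨1, one_pos, Filter.Eventually.of_forall fun n => ?_⟩
    have : {ω | X (n + 1) ω - xstar > ε} = ∅ := by
      ext ω
      simp only [Set.mem_setOf_eq, Set.mem_empty_iff_false, iff_false, not_lt]
      have := (hXmem (n + 1) ω).2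
      linarith
    rw [this]
    simp
  · push_neg at hcase
    have hxs0 : 0 ≤ xstar := hxs_mem.1
    have hε1 : ε < 1 := by linarith
    set δ : ℝ := ε / 2 with hδdef
    have hδ : 0 < δ := by positivity
    have hδhalf : δ < 1 / 2 := by simp only [hδdef]; linarith
    set b : ℝ := xstar + δ with hbdef
    have hb_mem : b ∈ Set.Icc (0:ℝ) 1 := by
      constructor
      · simp only [hbdef]; linarith
      · simp only [hbdef, hδdef]; linarith
    have hbgt : xstar < b := by simp only [hbdef]; linarith
    set c₁ : ℝ := -g b with hc₁def
    have hc₁ : 0 < c₁ := by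
      have := hg_neg b hb_mem hbgt
      simp only [hc₁def]; linarith
    obtain ⟨C, hC, hCeq⟩ : ∃ C : ℝ, 0 < C ∧ C = uu * Ku := ⟨uu * Ku, by positivity, rfl⟩
    obtain ⟨M, hM2, hMe⟩ : ∃ M : ℕ, 2 ≤ M ∧ Real.exp (2 / (c₁ * ul) + 1) ≤ (M : ℝ) := by
      refine ⟨max 2 ⌈Real.exp (2 / (c₁ * ul) + 1)⌉₊, le_max_left _ _, ?_⟩
      calc Real.exp (2 / (c₁ * ul) + 1) ≤ (⌈Real.exp (2 / (c₁ * ul) + 1)⌉₊ : ℝ) := Nat.le_ceil _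
      _ ≤ _ := by exact_mod_cast Nat.le_max_right 2 _
    have hMpos : 0 < M := by omega
    have hMposR : (0:ℝ) < M := by exact_mod_cast hMpos
    obtain ⟨t₀, ht₀, ht₀1, ht₀2⟩ : ∃ t₀ : ℝ, 0 < t₀ ∧ t₀ ≤ 1 / (C * M) ∧
        t₀ ≤ δ / (8 * C ^ 2 * M) := by
      refine ⟨min (1 / (C * M)) (δ / (8 * C ^ 2 * M)), ?_, min_le_left _ _, min_le_right _ _⟩
      apply lt_min <;> positivity
    obtain ⟨a₀, ha₀, ha₀eq⟩ : ∃ a₀ : ℝ, 0 < a₀ ∧ a₀ = t₀ * δ / 4 := ⟨_, by positivity, rfl⟩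
    obtain ⟨K₁, hK₁eq⟩ : ∃ K₁ : ℝ, K₁ = 2 * t₀ * Ke * M := ⟨_, rfl⟩
    refine ⟨a₀ / 2, by positivity, ?_⟩
    -- the noise sequence
    set D : ℕ → Ω → ℝ := fun j ω => γ (j + 1) ω * U (j + 1) ω with hDdef
    set B : ℕ → ℝ := fun j => C / ((j : ℝ) + 1) with hBdef
    set e : ℕ → ℝ := fun j => Ke / (j : ℝ) ^ 2 with hedef
    have hD : ∀ j, Measurable[ℱ (j + 1)] (D j) := fun j =>
      (hγ_meas (j + 1)).mul (hU_meas (j + 1))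
    have hDB : ∀ j, ∀ᵐ ω ∂ℙ, |D j ω| ≤ B j := by
      intro j
      filter_upwards [hγ_bound (j + 1) (by omega), hU_bound j] with ω hγω hUω
      have hγnn : 0 ≤ γ (j + 1) ω := by
        have h1 : (0:ℝ) < ul / ((j:ℝ) + 1) := by positivity
        have h2 := hγω.1
        push_cast at h2
        linarith
      have hγle : γ (j + 1) ω ≤ uu / ((j:ℝ) + 1) := by
        have h2 := hγω.2
        push_cast at h2
        linarith
      simp only [hDdef, hBdef]
      rw [abs_mul, abs_of_nonneg hγnn]
      have hstep : γ (j + 1) ω * |U (j + 1) ω| ≤ (uu / ((j:ℝ) + 1)) * Ku :=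
        mul_le_mul hγle hUω (abs_nonneg _) (by positivity)
      have heq : (uu / ((j:ℝ) + 1)) * Ku = C / ((j : ℝ) + 1) := by
        rw [hCeq]; ring
      linarith
    have hDe : ∀ j, 1 ≤ j → ∀ᵐ ω ∂ℙ, |(ℙ[D j|ℱ j]) ω| ≤ e j := fun j hj => hcond j hj
    -- main eventual statement
    have hev1 : ∀ᶠ n : ℕ in atTop, 2 ≤ n := eventually_ge_atTop 2
    have hev2 : ∀ᶠ n : ℕ in atTop, 2 * uu * Kg * M / δ ≤ (n : ℝ) := by
      have := tendsto_natCast_atTop_atTop (R := ℝ)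
      exact this.eventually_ge_atTop _
    have hev3 : ∀ᶠ n : ℕ in atTop, 2 * M ≤ n := eventually_ge_atTop (2 * M)
    have hev4 : ∀ᶠ n : ℕ in atTop, (n : ℝ) * Real.exp K₁ ≤ Real.exp (a₀ / 2 * n) :=
      eventually_mul_exp_le (a₀ / 2) K₁ (by positivity)
    filter_upwards [hev1, hev2, hev3, hev4] with n hn2 hnδ hn2M hnexp
    obtain ⟨k₀, hk₀1, hk₀n, hk₀low, hk₀high⟩ : ∃ k₀ : ℕ, 1 ≤ k₀ ∧ k₀ ≤ n ∧
        n < M * k₀ ∧ M * k₀ ≤ n + M := by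
      refine ⟨n / M + 1, Nat.succ_le_succ (Nat.zero_le _), ?_, ?_, ?_⟩
      · have h1 : n / M ≤ n / 2 := Nat.div_le_div_left hM2 two_pos
        have h2 : n / 2 + 1 ≤ n := by omega
        exact le_trans (Nat.succ_le_succ h1) h2
      · have hmod := Nat.div_add_mod n M
        have hlt : n % M < M := Nat.mod_lt n hMpos
        calc n = M * (n / M) + n % M := hmod.symm
        _ < M * (n / M) + M := by omega
        _ = M * (n / M + 1) := by rw [Nat.mul_succ]
      · have hle : M * (n / M) ≤ n := Nat.mul_div_le n M
        calc M * (n / M + 1) = M * (n / M) + M := by rw [Nat.mul_succ]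
        _ ≤ n + M := by omega
    have hnM : (n : ℝ) ≤ M * (k₀ : ℝ) := by exact_mod_cast hk₀low.le
    have hnpos : (0:ℝ) < n := by exact_mod_cast (by omega : 0 < n)
    have hk₀pos : (0:ℝ) < (k₀ : ℝ) := by exact_mod_cast hk₀1
    have hinvk₀ : 1 / (k₀ : ℝ) ≤ M / n := by
      rw [div_le_div_iff₀ hk₀pos hnpos]
      linarith
    set t : ℝ := t₀ * n with htdef
    have ht : 0 ≤ t := by positivity
    -- Chernoff bound for each window start k ∈ [k₀, n]
    have hchern : ∀ k, k₀ ≤ k →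
        ℙ {ω | δ / 2 ≤ ∑ j ∈ Finset.Icc k n, D j ω} ≤
          ENNReal.ofReal (Real.exp (K₁ - a₀ * n)) := by
      intro k hk
      have hkpos : (0:ℝ) < (k : ℝ) := by
        have : 1 ≤ k := le_trans hk₀1 hk
        exact_mod_cast this
      have hinvk : 1 / (k : ℝ) ≤ M / n := by
        have : (1:ℝ) / k ≤ 1 / k₀ := by
          apply one_div_le_one_div_of_le hk₀pos
          exact_mod_cast hk
        linarith
      have htB : ∀ j, k ≤ j → t * B j ≤ 1 := by
        intro j hj
        have hjk : (k : ℝ) ≤ (j : ℝ) + 1 := by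
          have : k ≤ j := hj
          have : (k:ℝ) ≤ (j:ℝ) := by exact_mod_cast this
          linarith
        have hBj : B j ≤ C / k := by
          simp only [hBdef]
          gcongr
        have : t * B j ≤ t * (C / k) :=
          mul_le_mul_of_nonneg_left hBj ht
        calc t * B j ≤ t * (C / k) := this
        _ = t₀ * n * C * (1 / k) := by simp only [htdef]; ring
        _ ≤ t₀ * n * C * (M / n) := by
            apply mul_le_mul_of_nonneg_left hinvk (by positivity)
        _ = t₀ * C * M := by field_simp
        _ ≤ (1 / (C * M)) * C * M := by
            have : t₀ ≤ 1 / (C * M) := ht₀1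
            apply mul_le_mul_of_nonneg_right
              (mul_le_mul_of_nonneg_right this hC.le) (by positivity)
        _ = 1 := by field_simp
      have hch := chernoff_window ℱ hD hDB (fun j hj => hDe j (le_trans hk₀1 (le_trans hk hj)))
        ht htB n (s := δ / 2)
      refine le_trans hch (ENNReal.ofReal_le_ofReal (Real.exp_le_exp.2 ?_))
      -- exponent arithmetic
      have hsum_e : ∑ j ∈ Finset.Icc k n, e j ≤ 2 * Ke * M / n := by
        have h1 : ∑ j ∈ Finset.Icc k n, e j = Ke * ∑ j ∈ Finset.Icc k n, (1:ℝ) / (j:ℝ)^2 := by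
          rw [Finset.mul_sum]
          apply Finset.sum_congr rfl
          intro j _
          simp only [hedef]
          ring
        rw [h1]
        calc Ke * ∑ j ∈ Finset.Icc k n, (1:ℝ) / (j:ℝ)^2 ≤ Ke * (2 / k) := by
              apply mul_le_mul_of_nonneg_left (sum_inv_sq_le (le_trans hk₀1 hk)) hKe.le
        _ = 2 * Ke * (1 / k) := by ring
        _ ≤ 2 * Ke * (M / n) := by
              apply mul_le_mul_of_nonneg_left hinvk (by positivity)
        _ = 2 * Ke * M / n := by ring
      have hsum_B : ∑ j ∈ Finset.Icc k n, (B j) ^ 2 ≤ 2 * C ^ 2 * M / n := by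
        have h1 : ∀ j ∈ Finset.Icc k n, (B j) ^ 2 ≤ C ^ 2 * ((1:ℝ) / (j:ℝ)^2) := by
          intro j hj
          have hj1 : 1 ≤ j := le_trans hk₀1 (le_trans hk (Finset.mem_Icc.1 hj).1)
          have hjpos : (0:ℝ) < j := by exact_mod_cast hj1
          simp only [hBdef]
          rw [div_pow]
          have h2 : (j:ℝ)^2 ≤ ((j:ℝ)+1)^2 := by nlinarith
          calc C ^ 2 / ((j:ℝ)+1) ^ 2 ≤ C ^ 2 / (j:ℝ) ^ 2 := by gcongr
          _ = C ^ 2 * ((1:ℝ) / (j:ℝ) ^ 2) := by ring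
        calc ∑ j ∈ Finset.Icc k n, (B j) ^ 2
            ≤ ∑ j ∈ Finset.Icc k n, C ^ 2 * ((1:ℝ) / (j:ℝ)^2) := Finset.sum_le_sum h1
        _ = C ^ 2 * ∑ j ∈ Finset.Icc k n, (1:ℝ) / (j:ℝ)^2 := by rw [Finset.mul_sum]
        _ ≤ C ^ 2 * (2 / k) := by
            apply mul_le_mul_of_nonneg_left (sum_inv_sq_le (le_trans hk₀1 hk)) (sq_nonneg C)
        _ = 2 * C ^ 2 * (1 / k) := by ring
        _ ≤ 2 * C ^ 2 * (M / n) := by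
            apply mul_le_mul_of_nonneg_left hinvk (by positivity)
        _ = 2 * C ^ 2 * M / n := by ring
      have hsplit : ∑ j ∈ Finset.Icc k n, (t * e j + t ^ 2 * (B j) ^ 2)
          = t * (∑ j ∈ Finset.Icc k n, e j) + t ^ 2 * (∑ j ∈ Finset.Icc k n, (B j) ^ 2) := by
        rw [Finset.sum_add_distrib, Finset.mul_sum, Finset.mul_sum]
      rw [hsplit]
      have hterm1 : t * (∑ j ∈ Finset.Icc k n, e j) ≤ K₁ := by
        calc t * (∑ j ∈ Finset.Icc k n, e j) ≤ t * (2 * Ke * M / n) := by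
              apply mul_le_mul_of_nonneg_left hsum_e ht
        _ = t₀ * (2 * Ke * M) * (n / n) := by simp only [htdef]; ring
        _ = K₁ := by rw [div_self (ne_of_gt hnpos)]; rw [hK₁eq]; ring
      have hterm2 : t ^ 2 * (∑ j ∈ Finset.Icc k n, (B j) ^ 2) ≤ a₀ * n := by
        calc t ^ 2 * (∑ j ∈ Finset.Icc k n, (B j) ^ 2) ≤ t ^ 2 * (2 * C ^ 2 * M / n) := by
              apply mul_le_mul_of_nonneg_left hsum_B (sq_nonneg t)
        _ = t₀ * (2 * t₀ * C ^ 2 * M) * n * (n / n) := by simp only [htdef]; ring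
        _ = t₀ * (2 * t₀ * C ^ 2 * M) * n := by rw [div_self (ne_of_gt hnpos)]; ring
        _ ≤ t₀ * (δ / 4) * n := by
            apply mul_le_mul_of_nonneg_right _ hnpos.le
            apply mul_le_mul_of_nonneg_left _ ht₀.le
            have ht₀' : t₀ ≤ δ / (8 * C ^ 2 * M) := ht₀2
            calc 2 * t₀ * C ^ 2 * M ≤ 2 * (δ / (8 * C ^ 2 * M)) * C ^ 2 * M := by
                  apply mul_le_mul_of_nonneg_right _ hMposR.le
                  apply mul_le_mul_of_nonneg_right _ (sq_nonneg C)
                  linarith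
            _ = δ / 4 * ((C ^ 2 * M) / (C ^ 2 * M)) := by ring
            _ = δ / 4 := by rw [div_self (by positivity)]; ring
        _ = a₀ * n := by rw [ha₀eq]; ring
      have htδ : -t * (δ / 2) = -(t₀ * δ / 2) * n := by simp only [htdef]; ring
      calc -t * (δ / 2) + (t * (∑ j ∈ Finset.Icc k n, e j)
            + t ^ 2 * (∑ j ∈ Finset.Icc k n, (B j) ^ 2))
          ≤ -(t₀ * δ / 2) * n + (K₁ + a₀ * n) := by rw [htδ]; linarith
      _ = K₁ - a₀ * n := by rw [ha₀eq]; ring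
    -- a.e. good set for γ
    have hgood : ∀ᵐ ω ∂ℙ, ∀ j : ℕ, 1 ≤ j → j ≤ n + 1 →
        ul / (j:ℝ) ≤ γ j ω ∧ γ j ω ≤ uu / (j:ℝ) := by
      rw [ae_all_iff]
      intro j
      by_cases hj : 1 ≤ j
      · filter_upwards [hγ_bound j hj] with ω hω _ _
        exact hω
      · filter_upwards with ω h1 h2
        exact absurd h1 hj
    have hinvk₀ : 1 / (k₀ : ℝ) ≤ (M : ℝ) / n := by
      rw [div_le_div_iff₀ hk₀pos hnpos]
      linarith
    -- pathwise inclusion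
    have hsub : ∀ᵐ ω ∂ℙ, ω ∈ {ω | X (n + 1) ω - xstar > ε} →
        ω ∈ ⋃ k ∈ Finset.Icc k₀ n, {ω | δ / 2 ≤ ∑ j ∈ Finset.Icc k n, D j ω} := by
      filter_upwards [hgood] with ω hγω hE
      have hγfacts : ∀ j, k₀ ≤ j → j ≤ n →
          0 ≤ γ (j+1) ω ∧ ul / ((j:ℝ)+1) ≤ γ (j+1) ω ∧ γ (j+1) ω ≤ uu / ((j:ℝ)+1) := by
        intro j hj1 hj2
        have h := hγω (j+1) (by omega) (by omega)
        push_cast at h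
        have h0 : (0:ℝ) < ul / ((j:ℝ)+1) := by positivity
        exact ⟨by linarith [h.1], h.1, h.2⟩
      have htel : ∀ k, k ≤ n → X (n+1) ω - X k ω =
          (∑ j ∈ Finset.Icc k n, γ (j+1) ω * g (X j ω)) + ∑ j ∈ Finset.Icc k n, D j ω := by
        intro k hk
        have h1 : ∑ j ∈ Finset.Icc k n, (X (j+1) ω - X j ω) = X (n+1) ω - X k ω :=
          sum_telescope_Icc (fun j => X j ω) k n (by omega)
        rw [← h1, ← Finset.sum_add_distrib]
        apply Finset.sum_congr rfl
        intro j _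
        rw [hrec j ω]
        simp only [hDdef]
        ring
      by_cases hexists : ∃ k ∈ Finset.Icc k₀ n, X k ω ≤ b
      · -- case (i): last exit time
        set K : Finset ℕ := (Finset.Icc k₀ n).filter (fun k => X k ω ≤ b) with hKdef
        have hKne : K.Nonempty := by
          obtain ⟨k, hk1, hk2⟩ := hexists
          exact ⟨k, Finset.mem_filter.2 ⟨hk1, hk2⟩⟩
        set k := K.max' hKne with hkdef
        have hkK : k ∈ K := K.max'_mem hKne
        have hkIcc : k ∈ Finset.Icc k₀ n := (Finset.mem_filter.1 hkK).1
        have hkb : X k ω ≤ b := (Finset.mem_filter.1 hkK).2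
        obtain ⟨hkk₀, hkn⟩ := Finset.mem_Icc.1 hkIcc
        have hafter : ∀ j, k < j → j ≤ n → b < X j ω := by
          intro j hj1 hj2
          by_contra hcon
          push_neg at hcon
          have hjK : j ∈ K :=
            Finset.mem_filter.2 ⟨Finset.mem_Icc.2 ⟨le_trans hkk₀ hj1.le, hj2⟩, hcon⟩
          have := K.le_max' j hjK
          omega
        have hγk := hγfacts k hkk₀ hkn
        have hdrift : (∑ j ∈ Finset.Icc k n, γ (j+1) ω * g (X j ω)) ≤ δ / 2 := by
          rw [← Finset.Ioc_insert_left hkn, Finset.sum_insert (by simp)]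
          have hrest : (∑ j ∈ Finset.Ioc k n, γ (j+1) ω * g (X j ω)) ≤ 0 := by
            apply Finset.sum_nonpos
            intro j hj
            obtain ⟨hj1, hj2⟩ := Finset.mem_Ioc.1 hj
            have hXj : b < X j ω := hafter j hj1 hj2
            have hgneg : g (X j ω) < 0 := hg_neg _ (hXmem j ω) (lt_trans hbgt hXj)
            have hγj := hγfacts j (le_trans hkk₀ hj1.le) hj2
            exact mul_nonpos_of_nonneg_of_nonpos hγj.1 hgneg.le
          have hfirst : γ (k+1) ω * g (X k ω) ≤ δ / 2 := by
            have hgb : g (X k ω) ≤ Kg :=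
              le_trans (le_abs_self _) (hg_bdd _ (hXmem k ω))
            have h1 : γ (k+1) ω * g (X k ω) ≤ γ (k+1) ω * Kg :=
              mul_le_mul_of_nonneg_left hgb hγk.1
            have h2 : γ (k+1) ω * Kg ≤ (uu / ((k:ℝ)+1)) * Kg :=
              mul_le_mul_of_nonneg_right hγk.2.2 hKg.le
            have hk₀k : (k₀:ℝ) ≤ (k:ℝ)+1 := by
              have : (k₀:ℝ) ≤ (k:ℝ) := by exact_mod_cast hkk₀
              linarith
            have h3 : uu / ((k:ℝ)+1) ≤ uu / (k₀:ℝ) := by gcongr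
            have h4 : uu / (k₀:ℝ) * Kg ≤ uu * Kg * (M / n) := by
              have : uu / (k₀:ℝ) * Kg = (uu * Kg) * (1 / (k₀:ℝ)) := by ring
              rw [this]
              apply mul_le_mul_of_nonneg_left hinvk₀ (by positivity)
            have h5 : uu * Kg * ((M:ℝ) / n) ≤ δ / 2 := by
              rw [mul_div_assoc'] at *
              rw [div_le_iff₀ hnpos]
              have h6 : 2 * uu * Kg * M ≤ δ * n := by
                have := (div_le_iff₀ hδ).1 hnδ
                linarith
              linarith
            have h7 : (uu / ((k:ℝ)+1)) * Kg ≤ uu / (k₀:ℝ) * Kg :=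
              mul_le_mul_of_nonneg_right h3 hKg.le
            linarith
          linarith
        have hsumD : δ / 2 ≤ ∑ j ∈ Finset.Icc k n, D j ω := by
          have h1 := htel k hkn
          have h2 : X (n+1) ω - X k ω > δ := by
            simp only [hbdef] at hkb
            simp only [hδdef] at *
            linarith
          linarith
        exact Set.mem_biUnion hkIcc hsumD
      · -- case (ii): stay above b
        push_neg at hexists
        have hdrift2 : (∑ j ∈ Finset.Icc k₀ n, γ (j+1) ω * g (X j ω)) ≤ -2 := by
          have hterm : ∀ j ∈ Finset.Icc k₀ n,
              γ (j+1) ω * g (X j ω) ≤ -(c₁ * ul) * (1/((j:ℝ)+1)) := by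
            intro j hj
            obtain ⟨hj1, hj2⟩ := Finset.mem_Icc.1 hj
            have hXj : b < X j ω := hexists j hj
            have hγj := hγfacts j hj1 hj2
            have hgle : g (X j ω) ≤ -c₁ := by
              have := hg_anti hb_mem (hXmem j ω) hXj.le
              simp only [hc₁def]
              linarith
            have h1 : γ (j+1) ω * g (X j ω) ≤ γ (j+1) ω * (-c₁) :=
              mul_le_mul_of_nonneg_left hgle hγj.1
            have h2 : γ (j+1) ω * (-c₁) ≤ (ul / ((j:ℝ)+1)) * (-c₁) :=
              mul_le_mul_of_nonpos_right hγj.2.1 (by linarith)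
            calc γ (j+1) ω * g (X j ω) ≤ (ul / ((j:ℝ)+1)) * (-c₁) := le_trans h1 h2
            _ = -(c₁ * ul) * (1/((j:ℝ)+1)) := by ring
          have hsum1 : (∑ j ∈ Finset.Icc k₀ n, γ (j+1) ω * g (X j ω)) ≤
              -(c₁ * ul) * ∑ j ∈ Finset.Icc k₀ n, (1:ℝ)/((j:ℝ)+1) := by
            rw [Finset.mul_sum]
            exact Finset.sum_le_sum hterm
          have hlog : 2 / (c₁ * ul) ≤ ∑ j ∈ Finset.Icc k₀ n, (1:ℝ)/((j:ℝ)+1) := by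
            have hlogM : 2 / (c₁ * ul) + 1 ≤ Real.log M := by
              rw [← Real.log_exp (2 / (c₁ * ul) + 1)]
              exact Real.log_le_log (Real.exp_pos _) hMe
            have hratio : (M:ℝ) / Real.exp 1 ≤ ((n:ℝ)+2)/((k₀:ℝ)+1) := by
              rw [div_le_div_iff₀ (Real.exp_pos 1) (by positivity)]
              have hMk₀1 : (M:ℝ) * ((k₀:ℝ)+1) ≤ (n:ℝ) + 2*M := by
                have hc : (M:ℝ) * k₀ ≤ (n:ℝ) + M := by exact_mod_cast hk₀high
                nlinarith
              have h2M : (n:ℝ) + 2*(M:ℝ) ≤ 2*((n:ℝ)+2) := by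
                have : (2*M:ℝ) ≤ (n:ℝ) := by exact_mod_cast hn2M
                linarith
              have hexp1 : (2:ℝ) ≤ Real.exp 1 := by
                have := Real.exp_one_gt_d9
                linarith
              nlinarith [hnpos.le]
            have hloglog : Real.log ((M:ℝ) / Real.exp 1) ≤
                Real.log (((n:ℝ)+2)/((k₀:ℝ)+1)) :=
              Real.log_le_log (by positivity) hratio
            have hlogdiv : Real.log ((M:ℝ) / Real.exp 1) = Real.log M - 1 := by
              rw [Real.log_div (ne_of_gt hMposR) (ne_of_gt (Real.exp_pos 1)), Real.log_exp]
            have := log_le_sum_inv (k := k₀) (n := n)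
            linarith
          have hpos : 0 < c₁ * ul := by positivity
          have h3 : 2 ≤ (c₁ * ul) * ∑ j ∈ Finset.Icc k₀ n, (1:ℝ)/((j:ℝ)+1) := by
            have := mul_le_mul_of_nonneg_left hlog hpos.le
            rw [mul_div_assoc'] at this
            calc (2:ℝ) = (c₁ * ul) * 2 / (c₁ * ul) := by field_simp
            _ ≤ _ := this
          linarith [hsum1]
        have hsumD : δ / 2 ≤ ∑ j ∈ Finset.Icc k₀ n, D j ω := by
          have h1 := htel k₀ hk₀n
          have h2 : X (n+1) ω - X k₀ ω ≥ -1 := by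
            have ha := (hXmem (n+1) ω).1
            have hb' := (hXmem k₀ ω).2
            linarith
          have h3 : δ / 2 ≤ 1 := by linarith
          linarith
        exact Set.mem_biUnion (Finset.mem_Icc.2 ⟨le_rfl, hk₀n⟩) hsumD
    -- union bound and conclusion
    have hunion : ℙ {ω | X (n + 1) ω - xstar > ε} ≤
        ∑ k ∈ Finset.Icc k₀ n, ℙ {ω | δ / 2 ≤ ∑ j ∈ Finset.Icc k n, D j ω} :=
      le_trans (measure_mono_ae hsub) (measure_biUnion_finset_le _ _)
    have hcard : ((Finset.Icc k₀ n).card : ENNReal) ≤ (n : ENNReal) := by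
      have h1 : (Finset.Icc k₀ n).card = n + 1 - k₀ := Nat.card_Icc k₀ n
      have h2 : n + 1 - k₀ ≤ n := by omega
      exact_mod_cast le_trans (by exact_mod_cast Nat.cast_le.2 (h1 ▸ h2)) le_rfl
    have hfinal : (n:ℝ) * Real.exp (K₁ - a₀ * n) ≤ Real.exp (-(a₀/2) * n) := by
      have e1 : (n:ℝ) * Real.exp (K₁ - a₀ * n) = ((n:ℝ) * Real.exp K₁) * Real.exp (-(a₀ * n)) := by
        rw [mul_assoc, ← Real.exp_add, sub_eq_add_neg]
      have e2 : Real.exp (a₀/2 * n) * Real.exp (-(a₀ * n)) = Real.exp (-(a₀/2) * n) := by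
        rw [← Real.exp_add]
        congr 1
        ring
      rw [e1, ← e2]
      exact mul_le_mul_of_nonneg_right hnexp (Real.exp_nonneg _)
    calc ℙ {ω | X (n + 1) ω - xstar > ε}
        ≤ ∑ k ∈ Finset.Icc k₀ n, ℙ {ω | δ / 2 ≤ ∑ j ∈ Finset.Icc k n, D j ω} := hunion
    _ ≤ ∑ _k ∈ Finset.Icc k₀ n, ENNReal.ofReal (Real.exp (K₁ - a₀ * n)) :=
        Finset.sum_le_sum fun k hk => hchern k (Finset.mem_Icc.1 hk).1
    _ = ((Finset.Icc k₀ n).card : ENNReal) * ENNReal.ofReal (Real.exp (K₁ - a₀ * n)) := by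
        rw [Finset.sum_const, nsmul_eq_mul]
    _ ≤ (n : ENNReal) * ENNReal.ofReal (Real.exp (K₁ - a₀ * n)) :=
        mul_le_mul_left hcard _
    _ = ENNReal.ofReal ((n:ℝ) * Real.exp (K₁ - a₀ * n)) := by
        rw [← ENNReal.ofReal_natCast n, ← ENNReal.ofReal_mul (by positivity)]
    _ ≤ ENNReal.ofReal (Real.exp (-(a₀/2) * n)) := ENNReal.ofReal_le_ofReal hfinal

/-- Large deviation inequality for a bounded stochastic approximation algorithm on [0,1]. -/
theorem sa_large_deviation_bounded
    {Ω : Type*} {m0 : MeasurableSpace Ω} {ℙ : Measure Ω} [IsProbabilityMeasure ℙ]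
    (ℱ : Filtration ℕ m0)
    (X γ U : ℕ → Ω → ℝ) (g : ℝ → ℝ) (x0 : ℝ)
    (hX_meas : ∀ n : ℕ, Measurable[ℱ n] (X n))
    (hγ_meas : ∀ n : ℕ, Measurable[ℱ n] (γ n))
    (hU_meas : ∀ n : ℕ, Measurable[ℱ n] (U n))
    (hX0 : ∀ ω, X 0 ω = x0)
    (hrec : ∀ (n : ℕ) ω, X (n + 1) ω = X n ω + γ (n + 1) ω * (g (X n ω) + U (n + 1) ω))
    (ul uu Ku Ke : ℝ) (hul : 0 < ul) (huu : 0 < uu) (hKu : 0 < Ku) (hKe : 0 < Ke)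
    (hγ_bound : ∀ n : ℕ, 1 ≤ n → ∀ᵐ ω ∂ℙ, ul / n ≤ γ n ω ∧ γ n ω ≤ uu / n)
    (hU_bound : ∀ n : ℕ, ∀ᵐ ω ∂ℙ, |U (n + 1) ω| ≤ Ku)
    (hcond : ∀ n : ℕ, 1 ≤ n →
      ∀ᵐ ω ∂ℙ, |(ℙ[fun ω' => γ (n + 1) ω' * U (n + 1) ω' | ℱ n]) ω| ≤ Ke / (n : ℝ) ^ 2)
    (hXmem : ∀ (n : ℕ) (ω : Ω), X n ω ∈ Set.Icc (0:ℝ) 1)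
    (Kg : ℝ) (hKg : 0 < Kg) (hg_bdd : ∀ x ∈ Set.Icc (0:ℝ) 1, |g x| ≤ Kg)
    (hg_anti : AntitoneOn g (Set.Icc 0 1))
    (hg_cont : ContinuousOn g (Set.Icc 0 1))
    (xstar : ℝ) (hxs_mem : xstar ∈ Set.Icc (0:ℝ) 1) (hxs_zero : g xstar = 0)
    (hxs_uniq : ∀ x ∈ Set.Icc (0:ℝ) 1, g x = 0 → x = xstar)
    (hg_pos : ∀ x ∈ Set.Icc (0:ℝ) 1, x < xstar → 0 < g x)
    (hg_neg : ∀ x ∈ Set.Icc (0:ℝ) 1, xstar < x → g x < 0) :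
    ∀ ε > (0:ℝ), ∃ a > (0:ℝ), ∀ᶠ n in atTop,
      ℙ {ω | |X (n + 1) ω - xstar| > ε} ≤ ENNReal.ofReal (2 * Real.exp (-a * n)) := by
  intro ε hε
  obtain ⟨a₁, ha₁, hev₁⟩ := SAaux.sa_upper ℱ X γ U g hγ_meas hU_meas hrec
    ul uu Ku Ke hul huu hKu hKe hγ_bound hU_bound hcond hXmem Kg hKg hg_bdd hg_anti
    xstar hxs_mem hg_neg ε hε
  -- reflected process
  have hrec' : ∀ (n : ℕ) ω, (1 - X (n + 1) ω) =
      (1 - X n ω) + γ (n + 1) ω * ((-g (1 - (1 - X n ω))) + (-U (n + 1) ω)) := by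
    intro n ω
    simp only [sub_sub_cancel]
    rw [hrec n ω]
    ring
  have hU_bound' : ∀ n : ℕ, ∀ᵐ ω ∂ℙ, |(-U (n + 1) ω)| ≤ Ku := by
    intro n
    filter_upwards [hU_bound n] with ω hω
    rwa [abs_neg]
  have hcond' : ∀ n : ℕ, 1 ≤ n →
      ∀ᵐ ω ∂ℙ, |(ℙ[fun ω' => γ (n + 1) ω' * (-U (n + 1) ω') | ℱ n]) ω| ≤ Ke / (n : ℝ) ^ 2 := by
    intro n hn
    have hfun : (fun ω' => γ (n + 1) ω' * (-U (n + 1) ω'))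
        = -(fun ω' => γ (n + 1) ω' * U (n + 1) ω') := by
      funext ω'
      simp only [Pi.neg_apply]
      ring
    have hneg := condExp_neg (μ := ℙ) (m := ℱ n) (fun ω' => γ (n + 1) ω' * U (n + 1) ω')
    filter_upwards [hcond n hn, hneg] with ω h1 h2
    rw [hfun, h2]
    simp only [Pi.neg_apply, abs_neg]
    exact h1
  have hXmem' : ∀ (n : ℕ) (ω : Ω), (1 - X n ω) ∈ Set.Icc (0:ℝ) 1 := by
    intro n ω
    have := hXmem n ω
    constructor <;> [linarith [this.2]; linarith [this.1]]
  have hg_bdd' : ∀ y ∈ Set.Icc (0:ℝ) 1, |(-g (1 - y))| ≤ Kg := by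
    intro y hy
    rw [abs_neg]
    apply hg_bdd
    constructor <;> [linarith [hy.2]; linarith [hy.1]]
  have hg_anti' : AntitoneOn (fun y => -g (1 - y)) (Set.Icc (0:ℝ) 1) := by
    intro x hx y hy hxy
    simp only [neg_le_neg_iff]
    apply hg_anti
    · constructor <;> [linarith [hy.2]; linarith [hy.1]]
    · constructor <;> [linarith [hx.2]; linarith [hx.1]]
    · linarith
  have hxs_mem' : (1 - xstar) ∈ Set.Icc (0:ℝ) 1 := by
    constructor <;> [linarith [hxs_mem.2]; linarith [hxs_mem.1]]
  have hg_neg' : ∀ y ∈ Set.Icc (0:ℝ) 1, 1 - xstar < y → (fun y => -g (1 - y)) y < 0 := by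
    intro y hy hlt
    simp only [neg_lt, neg_zero]
    apply hg_pos
    · constructor <;> [linarith [hy.2]; linarith [hy.1]]
    · linarith
  obtain ⟨a₂, ha₂, hev₂⟩ := SAaux.sa_upper ℱ (fun n ω => 1 - X n ω) γ (fun n ω => -U n ω)
    (fun y => -g (1 - y)) hγ_meas (fun n => (hU_meas n).neg) hrec'
    ul uu Ku Ke hul huu hKu hKe hγ_bound hU_bound' hcond' hXmem' Kg hKg hg_bdd' hg_anti'
    (1 - xstar) hxs_mem' hg_neg' ε hε
  refine ⟨min a₁ a₂, lt_min ha₁ ha₂, ?_⟩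
  filter_upwards [hev₁, hev₂] with n h₁ h₂
  have hsplit : {ω | |X (n + 1) ω - xstar| > ε} ⊆
      {ω | X (n + 1) ω - xstar > ε} ∪ {ω | (1 - X (n + 1) ω) - (1 - xstar) > ε} := by
    intro ω hω
    simp only [Set.mem_setOf_eq, Set.mem_union] at *
    rcases lt_abs.1 hω with h | h
    · left; exact h
    · right; linarith
  have hmin : ∀ (a : ℝ), min a₁ a₂ ≤ a → (n:ℝ) ≥ 0 →
      Real.exp (-a * n) ≤ Real.exp (-(min a₁ a₂) * n) := by
    intro a ha hn
    apply Real.exp_le_exp.2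
    have : -a ≤ -(min a₁ a₂) := by linarith
    exact mul_le_mul_of_nonneg_right this hn
  have hnn : (0:ℝ) ≤ (n:ℝ) := Nat.cast_nonneg n
  calc ℙ {ω | |X (n + 1) ω - xstar| > ε}
      ≤ ℙ ({ω | X (n + 1) ω - xstar > ε} ∪ {ω | (1 - X (n + 1) ω) - (1 - xstar) > ε}) :=
        measure_mono hsplit
  _ ≤ ℙ {ω | X (n + 1) ω - xstar > ε} + ℙ {ω | (1 - X (n + 1) ω) - (1 - xstar) > ε} :=
        measure_union_le _ _
  _ ≤ ENNReal.ofReal (Real.exp (-a₁ * n)) + ENNReal.ofReal (Real.exp (-a₂ * n)) :=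
        add_le_add h₁ h₂
  _ ≤ ENNReal.ofReal (Real.exp (-(min a₁ a₂) * n)) +
        ENNReal.ofReal (Real.exp (-(min a₁ a₂) * n)) := by
        apply add_le_add <;> apply ENNReal.ofReal_le_ofReal
        · exact hmin a₁ (min_le_left _ _) hnn
        · exact hmin a₂ (min_le_right _ _) hnn
  _ = ENNReal.ofReal (2 * Real.exp (-(min a₁ a₂) * n)) := by
        rw [← ENNReal.ofReal_add (Real.exp_nonneg _) (Real.exp_nonneg _)]
        congr 1
        ring
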